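/- Let V be a complex Hilbert space and M a set of continuous ℂ-linear operators on V closed under adjoints, such that (M,V) is a Schur system. Suppose θ is a conjugate-linear isometric involution of V commuting with every element of M, and let W = {v ∈ V : θ(v) = v}, which is a closed ℝ-linear subspace of V, a real Hilbert space under Re⟪·,·⟫, invariant under every m ∈ M. Then every continuous ℝ-linear operator T : W → W that commutes with its (real) adjoint and with the restriction to W of every element of M is a real scalar multiple of the identity: the space of normal operators of an R-real Schur system is isomorphic to ℝ. -/

import Mathlib

theorem rreal_extend_aux
    {V : Type*} [NormedAddCommGroup V] [InnerProductSpace ℂ V]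
    (θ : V → V)
    (hadd : ∀ x y, θ (x + y) = θ x + θ y)
    (hsmul : ∀ (a : ℂ) (x : V), θ (a • x) = (starRingEnd ℂ a) • θ x)
    (hnorm : ∀ x, ‖θ x‖ = ‖x‖)
    (hinvol : ∀ x, θ (θ x) = x)
    (W : Submodule ℝ V) (hWdef : ∀ v : V, v ∈ W ↔ θ v = v)
    (S : W →L[ℝ] W) :
    ∃ N : V →L[ℂ] V, ∀ w : W, N ↑w = ↑(S w) := by
  have hθ0 : θ 0 = 0 := by
    have h : θ 0 = θ 0 + θ 0 := by simpa using hadd 0 0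
    have := h.symm
    rwa [add_eq_left] at this
  have hθR : ∀ (r : ℝ) (x : V), θ (r • x) = r • θ x := by
    intro r x
    rw [← Complex.coe_smul, hsmul, Complex.conj_ofReal, Complex.coe_smul]
  have hθsub : ∀ x y, θ (x - y) = θ x - θ y := by
    intro x y
    have h := hadd (x - y) y
    rw [sub_add_cancel] at h
    rw [eq_sub_iff_add_eq, ← h]
  have hmemP : ∀ v : V, (2:ℂ)⁻¹ • (v + θ v) ∈ W := by
    intro v
    rw [hWdef, hsmul, hadd, hinvol, show (starRingEnd ℂ) ((2:ℂ)⁻¹) = (2:ℂ)⁻¹ by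
      simp [Complex.ext_iff]]
    rw [add_comm (θ v) v]
  have hmemQ : ∀ v : V, (-((2:ℂ)⁻¹) * Complex.I) • (v - θ v) ∈ W := by
    intro v
    rw [hWdef, hsmul, hθsub, hinvol, show (starRingEnd ℂ) (-((2:ℂ)⁻¹) * Complex.I)
      = -(-((2:ℂ)⁻¹) * Complex.I) by simp [Complex.ext_iff]]
    rw [neg_smul, ← smul_neg, neg_sub]
  set p : V → W := fun v => ⟨(2:ℂ)⁻¹ • (v + θ v), hmemP v⟩ with hp
  set q : V → W := fun v => ⟨(-((2:ℂ)⁻¹) * Complex.I) • (v - θ v), hmemQ v⟩ with hq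
  have hpadd : ∀ x y, p (x + y) = p x + p y := by
    intro x y
    apply Subtype.ext
    show (2:ℂ)⁻¹ • (x + y + θ (x + y)) = (2:ℂ)⁻¹ • (x + θ x) + (2:ℂ)⁻¹ • (y + θ y)
    rw [hadd]; module
  have hqadd : ∀ x y, q (x + y) = q x + q y := by
    intro x y
    apply Subtype.ext
    show (-((2:ℂ)⁻¹) * Complex.I) • (x + y - θ (x + y))
      = (-((2:ℂ)⁻¹) * Complex.I) • (x - θ x) + (-((2:ℂ)⁻¹) * Complex.I) • (y - θ y)
    rw [hadd]; module
  have hpR : ∀ (r : ℝ) (v : V), p (r • v) = r • p v := by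
    intro r v
    apply Subtype.ext
    show (2:ℂ)⁻¹ • (r • v + θ (r • v)) = r • ((2:ℂ)⁻¹ • (v + θ v))
    rw [hθR, ← smul_add, smul_comm]
  have hqR : ∀ (r : ℝ) (v : V), q (r • v) = r • q v := by
    intro r v
    apply Subtype.ext
    show (-((2:ℂ)⁻¹) * Complex.I) • (r • v - θ (r • v))
      = r • ((-((2:ℂ)⁻¹) * Complex.I) • (v - θ v))
    rw [hθR, ← smul_sub, smul_comm]
  have hpI : ∀ v : V, p (Complex.I • v) = - q v := by
    intro v
    apply Subtype.ext
    show (2:ℂ)⁻¹ • (Complex.I • v + θ (Complex.I • v))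
      = -((-((2:ℂ)⁻¹) * Complex.I) • (v - θ v))
    rw [hsmul, Complex.conj_I]
    module
  have hqI : ∀ v : V, q (Complex.I • v) = p v := by
    intro v
    apply Subtype.ext
    show (-((2:ℂ)⁻¹) * Complex.I) • (Complex.I • v - θ (Complex.I • v))
      = (2:ℂ)⁻¹ • (v + θ v)
    rw [hsmul, Complex.conj_I, neg_smul, sub_neg_eq_add, ← smul_add, smul_smul,
      show -((2:ℂ)⁻¹) * Complex.I * Complex.I = (2:ℂ)⁻¹ by
        rw [mul_assoc, Complex.I_mul_I]; ring]
  have hpnorm : ∀ v : V, ‖p v‖ ≤ ‖v‖ := by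
    intro v
    show ‖(2:ℂ)⁻¹ • (v + θ v)‖ ≤ ‖v‖
    rw [norm_smul]
    calc ‖(2:ℂ)⁻¹‖ * ‖v + θ v‖ ≤ ‖(2:ℂ)⁻¹‖ * (‖v‖ + ‖θ v‖) := by
          gcongr; exact norm_add_le _ _
      _ = ‖v‖ := by rw [hnorm]; simp; ring
  have hqnorm : ∀ v : V, ‖q v‖ ≤ ‖v‖ := by
    intro v
    show ‖(-((2:ℂ)⁻¹) * Complex.I) • (v - θ v)‖ ≤ ‖v‖
    rw [norm_smul]
    calc ‖-((2:ℂ)⁻¹) * Complex.I‖ * ‖v - θ v‖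
        ≤ ‖-((2:ℂ)⁻¹) * Complex.I‖ * (‖v‖ + ‖θ v‖) := by
          gcongr; exact norm_sub_le _ _
      _ = ‖v‖ := by rw [hnorm]; simp [Complex.norm_def, Complex.normSq]; ring
  -- the extension as a bare function
  set Nf : V → V := fun v => ↑(S (p v)) + Complex.I • (↑(S (q v)) : V) with hNf
  have hNadd : ∀ x y, Nf (x + y) = Nf x + Nf y := by
    intro x y
    simp only [hNf, hpadd, hqadd, map_add, Submodule.coe_add, smul_add]
    abel
  have hNR : ∀ (r : ℝ) (v : V), Nf (r • v) = r • Nf v := by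
    intro r v
    simp only [hNf, hpR, hqR, map_smul, SetLike.val_smul, smul_add]
    rw [smul_comm]
  have hNI : ∀ v : V, Nf (Complex.I • v) = Complex.I • Nf v := by
    intro v
    simp only [hNf, hpI, hqI, map_neg, Submodule.coe_neg, smul_add, smul_smul,
      Complex.I_mul_I, neg_one_smul]
    abel
  have hNC : ∀ (a : ℂ) (v : V), Nf (a • v) = a • Nf v := by
    intro a v
    have hav : a • v = (a.re : ℝ) • v + (a.im : ℝ) • (Complex.I • v) := by
      rw [← Complex.coe_smul, ← Complex.coe_smul, smul_smul, ← add_smul, Complex.re_add_im]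
    have hav' : a • Nf v = (a.re : ℝ) • Nf v + (a.im : ℝ) • (Complex.I • Nf v) := by
      rw [← Complex.coe_smul, ← Complex.coe_smul, smul_smul, ← add_smul, Complex.re_add_im]
    rw [hav, hNadd, hNR, hNR, hNI, hav']
  have hNbound : ∀ v : V, ‖Nf v‖ ≤ (‖S‖ + ‖S‖ + 1) * ‖v‖ := by
    intro v
    have h1 : ‖(↑(S (p v)) : V)‖ ≤ ‖S‖ * ‖v‖ := by
      calc ‖(↑(S (p v)) : V)‖ = ‖S (p v)‖ := rfl
        _ ≤ ‖S‖ * ‖p v‖ := S.le_opNorm _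
        _ ≤ ‖S‖ * ‖v‖ := mul_le_mul_of_nonneg_left (hpnorm v) (norm_nonneg S)
    have h2 : ‖Complex.I • (↑(S (q v)) : V)‖ ≤ ‖S‖ * ‖v‖ := by
      rw [norm_smul, Complex.norm_I, one_mul]
      calc ‖(↑(S (q v)) : V)‖ = ‖S (q v)‖ := rfl
        _ ≤ ‖S‖ * ‖q v‖ := S.le_opNorm _
        _ ≤ ‖S‖ * ‖v‖ := mul_le_mul_of_nonneg_left (hqnorm v) (norm_nonneg S)
    calc ‖Nf v‖ ≤ ‖(↑(S (p v)) : V)‖ + ‖Complex.I • (↑(S (q v)) : V)‖ := norm_add_le _ _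
      _ ≤ ‖S‖ * ‖v‖ + ‖S‖ * ‖v‖ := add_le_add h1 h2
      _ ≤ (‖S‖ + ‖S‖ + 1) * ‖v‖ := by nlinarith [norm_nonneg v]
  refine ⟨LinearMap.mkContinuous
    { toFun := Nf, map_add' := hNadd, map_smul' := hNC } (‖S‖ + ‖S‖ + 1) hNbound, ?_⟩
  intro w
  show Nf ↑w = ↑(S w)
  have hw : θ (w : V) = w := (hWdef _).mp w.2
  have hpw : p ↑w = w := by
    apply Subtype.ext
    show (2:ℂ)⁻¹ • ((w : V) + θ (w : V)) = (w : V)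
    rw [hw]; module
  have hqw : q ↑w = 0 := by
    apply Subtype.ext
    show (-((2:ℂ)⁻¹) * Complex.I) • ((w : V) - θ (w : V)) = 0
    rw [hw, sub_self, smul_zero]
  simp [hNf, hpw, hqw]

theorem rreal_schur_normal_operators_real
    {V : Type*} [NormedAddCommGroup V] [InnerProductSpace ℂ V] [CompleteSpace V]
    (M : Set (V →L[ℂ] V)) (hM : ∀ m ∈ M, ContinuousLinearMap.adjoint m ∈ M)
    (hSchur : ∀ N : V →L[ℂ] V,
      N ∘L ContinuousLinearMap.adjoint N = ContinuousLinearMap.adjoint N ∘L N →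
      (∀ m ∈ M, N ∘L m = m ∘L N) →
      ∃ c : ℂ, N = c • ContinuousLinearMap.id ℂ V)
    (θ : V → V)
    (hadd : ∀ x y, θ (x + y) = θ x + θ y)
    (hsmul : ∀ (a : ℂ) (x : V), θ (a • x) = (starRingEnd ℂ a) • θ x)
    (hnorm : ∀ x, ‖θ x‖ = ‖x‖)
    (hinvol : ∀ x, θ (θ x) = x)
    (hcomm : ∀ m ∈ M, ∀ x, θ (m x) = m (θ x))
    (W : Submodule ℝ V) (hWdef : ∀ v : V, v ∈ W ↔ θ v = v)
    (hWclosed : IsClosed (W : Set V))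
    (hWinv : ∀ m ∈ M, ∀ v : V, v ∈ W → m v ∈ W)
    (T Tadj : W →L[ℝ] W)
    (hTadj : ∀ x y : W,
      (inner ℂ ((Tadj x : V)) (y : V) : ℂ).re = (inner ℂ (x : V) ((T y : V)) : ℂ).re)
    (hTnormal : T ∘L Tadj = Tadj ∘L T)
    (hTcomm : ∀ m, ∀ hm : m ∈ M, ∀ w : W,
      (T ⟨m (w : V), hWinv m hm w w.2⟩ : V) = m (T w : V)) :
    ∃ c : ℝ, ∀ w : W, T w = c • w := by
  classical
  have hθsub : ∀ x y, θ (x - y) = θ x - θ y := by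
    intro x y
    have h := hadd (x - y) y
    rw [sub_add_cancel] at h
    rw [eq_sub_iff_add_eq, ← h]
  have hmemP : ∀ v : V, (2:ℂ)⁻¹ • (v + θ v) ∈ W := by
    intro v
    rw [hWdef, hsmul, hadd, hinvol, show (starRingEnd ℂ) ((2:ℂ)⁻¹) = (2:ℂ)⁻¹ by
      simp [Complex.ext_iff]]
    rw [add_comm (θ v) v]
  have hmemQ : ∀ v : V, (-((2:ℂ)⁻¹) * Complex.I) • (v - θ v) ∈ W := by
    intro v
    rw [hWdef, hsmul, hθsub, hinvol, show (starRingEnd ℂ) (-((2:ℂ)⁻¹) * Complex.I)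
      = -(-((2:ℂ)⁻¹) * Complex.I) by simp [Complex.ext_iff]]
    rw [neg_smul, ← smul_neg, neg_sub]
  set p : V → W := fun v => ⟨(2:ℂ)⁻¹ • (v + θ v), hmemP v⟩ with hp
  set q : V → W := fun v => ⟨(-((2:ℂ)⁻¹) * Complex.I) • (v - θ v), hmemQ v⟩ with hq
  have hdecomp : ∀ v : V, (↑(p v) : V) + Complex.I • (↑(q v) : V) = v := by
    intro v
    show (2:ℂ)⁻¹ • (v + θ v) + Complex.I • ((-((2:ℂ)⁻¹) * Complex.I) • (v - θ v)) = v
    rw [smul_smul, show Complex.I * (-((2:ℂ)⁻¹) * Complex.I) = (2:ℂ)⁻¹ by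
      rw [show Complex.I * (-((2:ℂ)⁻¹) * Complex.I) = -((2:ℂ)⁻¹) * (Complex.I * Complex.I) by
        ring, Complex.I_mul_I]; ring]
    module
  obtain ⟨N, hN⟩ := rreal_extend_aux θ hadd hsmul hnorm hinvol W hWdef T
  obtain ⟨N', hN'⟩ := rreal_extend_aux θ hadd hsmul hnorm hinvol W hWdef Tadj
  -- inner products of elements of W are real
  have hWreal : ∀ x y : V, x ∈ W → y ∈ W → (inner ℂ x y : ℂ).im = 0 := by
    intro x y hx hy
    have hx' := (hWdef x).mp hx
    have hy' := (hWdef y).mp hy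
    have hnn : ‖x + Complex.I • y‖ = ‖x - Complex.I • y‖ := by
      conv_lhs => rw [← hnorm (x + Complex.I • y)]
      rw [hadd, hsmul, Complex.conj_I, hx', hy', neg_smul, ← sub_eq_add_neg]
    have h1 := @norm_add_sq ℂ V _ _ _ x (Complex.I • y)
    have h2 := @norm_sub_sq ℂ V _ _ _ x (Complex.I • y)
    rw [hnn] at h1
    have h3 : RCLike.re (inner ℂ x (Complex.I • y) : ℂ) = 0 := by linarith
    rw [inner_smul_right] at h3
    simpa [RCLike.re_to_complex, Complex.mul_re] using h3
  have key : ∀ w w' : W, (inner ℂ ((Tadj w : W) : V) ((w' : W) : V) : ℂ)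
      = inner ℂ ((w : W) : V) ((T w' : W) : V) := by
    intro w w'
    apply Complex.ext
    · exact hTadj w w'
    · rw [hWreal _ _ (Tadj w).2 w'.2, hWreal _ _ w.2 (T w').2]
  have hadjN : N' = ContinuousLinearMap.adjoint N := by
    rw [ContinuousLinearMap.eq_adjoint_iff]
    have gen : ∀ a b a' b' : W,
        (inner ℂ (N' ((a : V) + Complex.I • (b : V)))
          ((a' : V) + Complex.I • (b' : V)) : ℂ)
        = inner ℂ ((a : V) + Complex.I • (b : V))
          (N ((a' : V) + Complex.I • (b' : V))) := by
      intro a b a' b'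
      simp only [map_add, map_smul, hN, hN']
      simp only [inner_add_left, inner_add_right, inner_smul_left, inner_smul_right,
        Complex.conj_I, key]
    intro x y
    rw [← hdecomp x, ← hdecomp y]
    exact gen (p x) (q x) (p y) (q y)
  have e1 : ∀ w : W, T (Tadj w) = Tadj (T w) := by
    intro w
    have := congrArg (fun (S : W →L[ℝ] W) => S w) hTnormal
    simpa using this
  have hnormal : N ∘L ContinuousLinearMap.adjoint N = ContinuousLinearMap.adjoint N ∘L N := by
    rw [← hadjN]
    ext v
    simp only [ContinuousLinearMap.comp_apply]
    have gen : ∀ a b : W, N (N' ((a : V) + Complex.I • (b : V)))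
        = N' (N ((a : V) + Complex.I • (b : V))) := by
      intro a b
      simp only [map_add, map_smul, hN, hN']
      rw [e1, e1]
    rw [← hdecomp v]
    exact gen (p v) (q v)
  have hcommN : ∀ m ∈ M, N ∘L m = m ∘L N := by
    intro m hm
    ext v
    simp only [ContinuousLinearMap.comp_apply]
    have gen : ∀ a b : W, N (m ((a : V) + Complex.I • (b : V)))
        = m (N ((a : V) + Complex.I • (b : V))) := by
      intro a b
      calc N (m ((a : V) + Complex.I • (b : V)))
          = N (m (a : V)) + Complex.I • N (m (b : V)) := by
            simp only [map_add, map_smul]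
        _ = (↑(T ⟨m (a : V), hWinv m hm _ a.2⟩) : V)
            + Complex.I • (↑(T ⟨m (b : V), hWinv m hm _ b.2⟩) : V) := by
            exact congrArg₂ (fun u v => u + Complex.I • v)
              (hN ⟨m (a : V), hWinv m hm _ a.2⟩) (hN ⟨m (b : V), hWinv m hm _ b.2⟩)
        _ = m ↑(T a) + Complex.I • m ↑(T b) := by
            rw [hTcomm m hm a, hTcomm m hm b]
        _ = m (N ((a : V) + Complex.I • (b : V))) := by
            simp only [map_add, map_smul, hN]
    rw [← hdecomp v]
    exact gen (p v) (q v)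
  obtain ⟨c, hc⟩ := hSchur N hnormal hcommN
  have hNW : ∀ w : W, ((T w : W) : V) = c • (w : V) := by
    intro w
    rw [← hN w, hc]
    simp
  refine ⟨c.re, ?_⟩
  intro w
  by_cases hw : w = 0
  · subst hw; simp
  · have hcoe : (w : V) ≠ 0 := by
      intro h
      exact hw (Subtype.ext h)
    have h1 : θ ((T w : W) : V) = ((T w : W) : V) := (hWdef _).mp (T w).2
    rw [hNW w, hsmul, (hWdef _).mp w.2] at h1
    have h2 : ((starRingEnd ℂ) c - c) • (w : V) = 0 := by
      rw [sub_smul, h1, sub_self]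
    have h3 : (starRingEnd ℂ) c = c := by
      rcases smul_eq_zero.mp h2 with h | h
      · exact sub_eq_zero.mp h
      · exact absurd h hcoe
    have hcre : ((c.re : ℝ) : ℂ) = c := by
      apply Complex.ext
      · simp
      · simpa using (Complex.conj_eq_iff_im.mp h3).symm
    apply Subtype.ext
    show ((T w : W) : V) = ↑(c.re • w)
    rw [hNW w, Submodule.coe_smul]
    conv_rhs => rw [← Complex.coe_smul, hcre]
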